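/- Ozawa's error-disturbance relation: with N = M_out − A, D = B_out − B self-adjoint, [M_out,B_out]=0, Ψ a unit vector, ε = ‖NΨ‖, η = ‖DΨ‖, and ΔA, ΔB the standard deviations of A, B in Ψ: ε·η + ε·ΔB + ΔA·η ≥ (1/2)|⟨Ψ,[A,B]Ψ⟩|. -/

import Mathlib

open Complex

local notation "⟪" x ", " y "⟫" => @inner ℂ _ _ x y

/-- Standard deviation of a (self-adjoint) operator `A` in state `ψ`. -/
noncomputable def sdev {E : Type*} [NormedAddCommGroup E] [InnerProductSpace ℂ E]
    (A : E →ₗ[ℂ] E) (ψ : E) : ℝ :=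
  Real.sqrt ((⟪ψ, A (A ψ)⟫).re - ((⟪ψ, A ψ⟫).re) ^ 2)

private lemma skew_bound {E : Type*} [NormedAddCommGroup E] [InnerProductSpace ℂ E]
    (x y : E) : ‖⟪x, y⟫ - ⟪y, x⟫‖ ≤ 2 * (‖x‖ * ‖y‖) := by
  calc ‖⟪x, y⟫ - ⟪y, x⟫‖ ≤ ‖⟪x, y⟫‖ + ‖⟪y, x⟫‖ := norm_sub_le _ _
    _ ≤ ‖x‖ * ‖y‖ + ‖y‖ * ‖x‖ :=
        add_le_add (norm_inner_le_norm x y) (norm_inner_le_norm y x)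
    _ = 2 * (‖x‖ * ‖y‖) := by ring

private lemma sdev_eq_norm {E : Type*} [NormedAddCommGroup E] [InnerProductSpace ℂ E]
    (B : E →ₗ[ℂ] E) (hB : ∀ x y : E, ⟪B x, y⟫ = ⟪x, B y⟫)
    (Ψ : E) (hΨ : ‖Ψ‖ = 1) :
    sdev B Ψ = ‖B Ψ - ((((⟪Ψ, B Ψ⟫).re : ℝ) : ℂ)) • Ψ‖ := by
  set b : ℝ := (⟪Ψ, B Ψ⟫).re with hb
  have h1 : (⟪Ψ, B (B Ψ)⟫).re = ‖B Ψ‖ ^ 2 := by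
    rw [← hB]
    exact inner_self_eq_norm_sq (𝕜 := ℂ) (B Ψ)
  have hre : (⟪B Ψ, Ψ⟫).re = b := inner_re_symm (𝕜 := ℂ) (B Ψ) Ψ
  have h2 : ‖B Ψ - ((b : ℂ)) • Ψ‖ ^ 2 = ‖B Ψ‖ ^ 2 - b ^ 2 := by
    rw [@norm_sub_sq ℂ]
    rw [inner_smul_right]
    simp [norm_smul, hΨ, hre]
    ring
  rw [sdev, h1, ← h2, Real.sqrt_sq (norm_nonneg _)]

/-- Ozawa's error–disturbance relation: εη + εΔB + ΔA·η ≥ (1/2)|⟨Ψ,[A,B]Ψ⟩|. -/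
theorem ozawa_relation
    {E : Type*} [NormedAddCommGroup E] [InnerProductSpace ℂ E]
    (A B Mo Bo : E →ₗ[ℂ] E)
    (hA : ∀ x y : E, ⟪A x, y⟫ = ⟪x, A y⟫)
    (hB : ∀ x y : E, ⟪B x, y⟫ = ⟪x, B y⟫)
    (hMo : ∀ x y : E, ⟪Mo x, y⟫ = ⟪x, Mo y⟫)
    (hBo : ∀ x y : E, ⟪Bo x, y⟫ = ⟪x, Bo y⟫)
    (hcomm : Mo ∘ₗ Bo = Bo ∘ₗ Mo)
    (N D : E →ₗ[ℂ] E) (hN : N = Mo - A) (hD : D = Bo - B)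
    (Ψ : E) (hΨ : ‖Ψ‖ = 1) :
    ‖N Ψ‖ * ‖D Ψ‖ + ‖N Ψ‖ * sdev B Ψ + sdev A Ψ * ‖D Ψ‖ ≥
      (1 / 2) * ‖⟪Ψ, A (B Ψ) - B (A Ψ)⟫‖ := by
  have htarget : ⟪Ψ, A (B Ψ) - B (A Ψ)⟫ = ⟪A Ψ, B Ψ⟫ - ⟪B Ψ, A Ψ⟫ := by
    rw [inner_sub_right, ← hA Ψ (B Ψ), ← hB Ψ (A Ψ)]
  set n := N Ψ with hn
  set d := D Ψ with hd
  set u := A Ψ with hu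
  set w := B Ψ with hw
  set a : ℝ := (⟪Ψ, A Ψ⟫).re with ha
  set b : ℝ := (⟪Ψ, B Ψ⟫).re with hbdef
  set va := u - ((a : ℂ)) • Ψ with hva
  set vb := w - ((b : ℂ)) • Ψ with hvb
  have hMoΨ : Mo Ψ = n + u := by
    rw [hn, hN]; simp [hu]
  have hBoΨ : Bo Ψ = d + w := by
    rw [hd, hD]; simp [hw]
  -- commuting outputs
  have hzero : ⟪Mo Ψ, Bo Ψ⟫ - ⟪Bo Ψ, Mo Ψ⟫ = 0 := by
    have hc : Mo (Bo Ψ) = Bo (Mo Ψ) := DFunLike.congr_fun hcomm Ψ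
    rw [hMo, hc, ← hBo]
    ring
  have hexpand : ⟪u, w⟫ - ⟪w, u⟫ =
      -((⟪n, d⟫ - ⟪d, n⟫) + (⟪n, w⟫ - ⟪w, n⟫) + (⟪u, d⟫ - ⟪d, u⟫)) := by
    rw [hMoΨ, hBoΨ] at hzero
    simp only [inner_add_left, inner_add_right] at hzero
    linear_combination hzero
  -- N, D self-adjoint at Ψ
  have hnΨ : ⟪n, Ψ⟫ = ⟪Ψ, n⟫ := by
    rw [hn, hN]
    simp only [LinearMap.sub_apply, inner_sub_left, inner_sub_right, hMo, hA]
  have hdΨ : ⟪d, Ψ⟫ = ⟪Ψ, d⟫ := by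
    rw [hd, hD]
    simp only [LinearMap.sub_apply, inner_sub_left, inner_sub_right, hBo, hB]
  -- centering
  have hcenter2 : ⟪n, w⟫ - ⟪w, n⟫ = ⟪n, vb⟫ - ⟪vb, n⟫ := by
    rw [hvb]
    simp only [inner_sub_left, inner_sub_right, inner_smul_left, inner_smul_right,
      Complex.conj_ofReal]
    linear_combination (b : ℂ) * hnΨ
  have hcenter3 : ⟪u, d⟫ - ⟪d, u⟫ = ⟪va, d⟫ - ⟪d, va⟫ := by
    rw [hva]
    simp only [inner_sub_left, inner_sub_right, inner_smul_left, inner_smul_right,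
      Complex.conj_ofReal]
    linear_combination -((a : ℂ) * hdΨ)
  -- sdev identities
  have hsB : sdev B Ψ = ‖vb‖ := sdev_eq_norm B hB Ψ hΨ
  have hsA : sdev A Ψ = ‖va‖ := sdev_eq_norm A hA Ψ hΨ
  -- bounds
  have b1 := skew_bound n d
  have b2 := skew_bound n vb
  have b3 := skew_bound va d
  have habs : ‖⟪Ψ, A (B Ψ) - B (A Ψ)⟫‖ ≤
      ‖⟪n, d⟫ - ⟪d, n⟫‖ + ‖⟪n, vb⟫ - ⟪vb, n⟫‖
        + ‖⟪va, d⟫ - ⟪d, va⟫‖ := by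
    rw [htarget, hexpand, hcenter2, hcenter3, norm_neg]
    calc ‖(⟪n, d⟫ - ⟪d, n⟫) + (⟪n, vb⟫ - ⟪vb, n⟫) + (⟪va, d⟫ - ⟪d, va⟫)‖
        ≤ ‖(⟪n, d⟫ - ⟪d, n⟫) + (⟪n, vb⟫ - ⟪vb, n⟫)‖
            + ‖⟪va, d⟫ - ⟪d, va⟫‖ := norm_add_le _ _
      _ ≤ ‖⟪n, d⟫ - ⟪d, n⟫‖ + ‖⟪n, vb⟫ - ⟪vb, n⟫‖
            + ‖⟪va, d⟫ - ⟪d, va⟫‖ :=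
          add_le_add_left (norm_add_le _ _) _
  rw [ge_iff_le, hsB, hsA]
  nlinarith [habs, b1, b2, b3]
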